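/- Let A ∈ ℝ^{n×n}, B ∈ ℝ^{n×m}, K ∈ ℝ^{m×n}, B_f ∈ ℝ^{n×m}, and let Ā, P, Ē ∈ ℝ^{q×q} (q = n + m) with P symmetric positive definite and Ē invertible, Q ∈ ℝ^{n×n} symmetric positive definite, C̄ ∈ ℝ^{p×q}, N ∈ ℝ^{q×p}, B̄_f ∈ ℝ^{q×m}, C_ω ∈ ℝ^{p×p}, H₁ ∈ ℝ^{m×p}, H₂ ∈ ℝ^{p×p}. Set L = Ē P⁻¹ N and assume: (i) the symmetric block matrix Ξ = [[Ξ₁₁, Ξ₁₂],[Ξ₁₂ᵀ, Ξ₂₂]] is negative definite, where Ξ₁₁ = Q(A+BK) + (A+BK)ᵀQ, Ξ₁₂ = Q·[−BK B_f] (an n×q block), and Ξ₂₂ = P Ē⁻¹ Ā + Āᵀ Ē⁻ᵀ P − N C̄ − C̄ᵀ Nᵀ; (ii) (H₁ C̄)ᵀ = P Ē⁻¹ B̄_f and (H₂ C̄)ᵀ = P Ē⁻¹ L C_ω. Let ρ = c + η with c ≥ 0, η ≥ 0, and ω̄ ≥ 0. Let x : ℝ → ℝ^n and ē : ℝ → ℝ^q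 be differentiable, and let d̄ : ℝ → ℝ^m, ω : ℝ → ℝ^p satisfy |d̄(t)_i| ≤ c and |ω(t)_j| ≤ ω̄ for all t, i, j. Suppose for all t: x′(t) = (A+BK)x(t) + [−BK B_f]·ē(t), and Ē ē′(t) = (Ā − L C̄) ē(t) + L C_ω(−ω̄·sgn(H₂ C̄ ē(t)) − ω(t)) + B̄_f(d̄(t) − ρ·sgn(H₁ C̄ ē(t))). Then V(t) = x(t)ᵀ Q x(t) + ē(t)ᵀ P ē(t) is differentiable with V′(t) ≤ 0 for every t, and V′(t) < 0 whenever (x(t), ē(t)) ≠ (0, 0). -/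

import Mathlib

open Matrix

/-- Componentwise sign vector: `(sgn s) i = 1` if `s i > 0`, `-1` if `s i < 0`, `0` otherwise. -/
noncomputable def sgn {k : Type*} (s : k → ℝ) : k → ℝ := fun i => Real.sign (s i)

private lemma self_mul_rsign (x : ℝ) : x * Real.sign x = |x| := by
  rcases lt_trichotomy x 0 with h|h|h
  · simp [Real.sign_of_neg h, abs_of_neg h]
  · simp [h]
  · simp [Real.sign_of_pos h, abs_of_pos h]

private lemma mulVec_dot_eq {k l : Type*} [Fintype k] [Fintype l] (M : Matrix k l ℝ)
    (a : l → ℝ) (b : k → ℝ) : (M *ᵥ a) ⬝ᵥ b = a ⬝ᵥ Mᵀ *ᵥ b := by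
  rw [dotProduct_mulVec, vecMul_transpose]

private lemma dot_transpose_eq {k l : Type*} [Fintype k] [Fintype l] (M : Matrix k l ℝ)
    (a : l → ℝ) (b : k → ℝ) : a ⬝ᵥ Mᵀ *ᵥ b = b ⬝ᵥ M *ᵥ a := by
  rw [← mulVec_dot_eq, dotProduct_comm]

private lemma dot_symm_of {k : Type*} [Fintype k] {M : Matrix k k ℝ} (hM : Mᵀ = M)
    (a b : k → ℝ) : a ⬝ᵥ M *ᵥ b = b ⬝ᵥ M *ᵥ a := by
  rw [← hM, dot_transpose_eq, hM]

private lemma hasDerivAt_dotmv {k l : Type*} [Fintype k] [Fintype l] (M : Matrix k l ℝ)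
    {u : ℝ → k → ℝ} {v : ℝ → l → ℝ} {u' : k → ℝ} {v' : l → ℝ} {t : ℝ}
    (hu : HasDerivAt u u' t) (hv : HasDerivAt v v' t) :
    HasDerivAt (fun t => u t ⬝ᵥ M.mulVec (v t))
      (u' ⬝ᵥ M.mulVec (v t) + u t ⬝ᵥ M.mulVec v') t := by
  have hui : ∀ i, HasDerivAt (fun t => u t i) (u' i) t := fun i => hasDerivAt_pi.mp hu i
  have hvj : ∀ j, HasDerivAt (fun t => v t j) (v' j) t := fun j => hasDerivAt_pi.mp hv j
  have hfun : (fun t => u t ⬝ᵥ M.mulVec (v t))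
      = fun t => ∑ i, ∑ j, u t i * (M i j * v t j) := by
    funext t; simp [dotProduct, mulVec, Finset.mul_sum]
  have h : HasDerivAt (fun t => ∑ i, ∑ j, u t i * (M i j * v t j))
      (∑ i, ∑ j, (u' i * (M i j * v t j) + u t i * (M i j * v' j))) t := by
    apply HasDerivAt.fun_sum; intro i _; apply HasDerivAt.fun_sum; intro j _
    exact (hui i).mul ((hvj j).const_mul (M i j))
  rw [hfun]
  convert h using 1
  simp [dotProduct, mulVec, Finset.mul_sum, Finset.sum_add_distrib]

private lemma cross_bound1 {p : Type*} [Fintype p] (s ω : p → ℝ) (ωb : ℝ)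
    (hω : ∀ j, |ω j| ≤ ωb) : s ⬝ᵥ (-(ωb • sgn s) - ω) ≤ 0 := by
  simp only [dotProduct, Pi.sub_apply, Pi.neg_apply, Pi.smul_apply, smul_eq_mul, sgn]
  apply Finset.sum_nonpos; intro j _
  have h1 : s j * Real.sign (s j) = |s j| := self_mul_rsign _
  have h2 : |s j * ω j| ≤ |s j| * ωb := by
    rw [abs_mul]; exact mul_le_mul_of_nonneg_left (hω j) (abs_nonneg _)
  have h3 : s j * (-(ωb * Real.sign (s j)) - ω j)
      = -(ωb * (s j * Real.sign (s j))) - s j * ω j := by ring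
  rw [h3, h1]
  linarith [neg_abs_le (s j * ω j), h2]

private lemma cross_bound2 {m : Type*} [Fintype m] (r d : m → ℝ) (c η : ℝ)
    (hη : 0 ≤ η) (hd : ∀ i, |d i| ≤ c) : r ⬝ᵥ (d - (c + η) • sgn r) ≤ 0 := by
  simp only [dotProduct, Pi.sub_apply, Pi.smul_apply, smul_eq_mul, sgn]
  apply Finset.sum_nonpos; intro i _
  have h1 : r i * Real.sign (r i) = |r i| := self_mul_rsign _
  have h2 : |r i * d i| ≤ |r i| * c := by
    rw [abs_mul]; exact mul_le_mul_of_nonneg_left (hd i) (abs_nonneg _)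
  have h3 : r i * (d i - (c + η) * Real.sign (r i))
      = r i * d i - (c + η) * (r i * Real.sign (r i)) := by ring
  rw [h3, h1]
  linarith [le_abs_self (r i * d i), h2, mul_nonneg hη (abs_nonneg (r i))]

/-- Theorem 2 of the paper: stability of the closed-loop system under the
SMO-based compensation controller.  The augmented dimension `q = n + m` is modelled by the
index type `Fin n ⊕ Fin m`, and `[−BK  B_f]` by `fromColumns (−BK) B_f`. -/
theorem stmt7 {n m p : ℕ}
    (A : Matrix (Fin n) (Fin n) ℝ) (B : Matrix (Fin n) (Fin m) ℝ)
    (K : Matrix (Fin m) (Fin n) ℝ) (Bf : Matrix (Fin n) (Fin m) ℝ)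
    (Abar P E : Matrix (Fin n ⊕ Fin m) (Fin n ⊕ Fin m) ℝ)
    (hPsymm : Pᵀ = P)
    (hPpos : ∀ x : Fin n ⊕ Fin m → ℝ, x ≠ 0 → 0 < x ⬝ᵥ P.mulVec x)
    (hE : IsUnit E.det)
    (Q : Matrix (Fin n) (Fin n) ℝ)
    (hQsymm : Qᵀ = Q) (hQpos : ∀ x : Fin n → ℝ, x ≠ 0 → 0 < x ⬝ᵥ Q.mulVec x)
    (C : Matrix (Fin p) (Fin n ⊕ Fin m) ℝ) (N : Matrix (Fin n ⊕ Fin m) (Fin p) ℝ)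
    (Bfbar : Matrix (Fin n ⊕ Fin m) (Fin m) ℝ) (Cω : Matrix (Fin p) (Fin p) ℝ)
    (H₁ : Matrix (Fin m) (Fin p) ℝ) (H₂ : Matrix (Fin p) (Fin p) ℝ)
    (L : Matrix (Fin n ⊕ Fin m) (Fin p) ℝ) (hL : L = E * P⁻¹ * N)
    (Ξ : Matrix ((Fin n) ⊕ (Fin n ⊕ Fin m)) ((Fin n) ⊕ (Fin n ⊕ Fin m)) ℝ)
    (hΞ : Ξ = fromBlocks
      (Q * (A + B * K) + (A + B * K)ᵀ * Q)
      (Q * fromCols (-(B * K)) Bf)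
      (Q * fromCols (-(B * K)) Bf)ᵀ
      (P * E⁻¹ * Abar + Abarᵀ * (E⁻¹)ᵀ * P - N * C - Cᵀ * Nᵀ))
    (hNegDef : ∀ ξ : Fin n ⊕ (Fin n ⊕ Fin m) → ℝ, ξ ≠ 0 → ξ ⬝ᵥ Ξ.mulVec ξ < 0)
    (hH₁ : (H₁ * C)ᵀ = P * E⁻¹ * Bfbar)
    (hH₂ : (H₂ * C)ᵀ = P * E⁻¹ * L * Cω)
    (c η ρ ωb : ℝ) (hc : 0 ≤ c) (hη : 0 ≤ η) (hρ : ρ = c + η) (hωb : 0 ≤ ωb)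
    (x : ℝ → Fin n → ℝ) (hx : Differentiable ℝ x)
    (e : ℝ → Fin n ⊕ Fin m → ℝ) (he : Differentiable ℝ e)
    (d : ℝ → Fin m → ℝ) (ω : ℝ → Fin p → ℝ)
    (hd : ∀ t i, |d t i| ≤ c) (hω : ∀ t j, |ω t j| ≤ ωb)
    (hxdyn : ∀ t, deriv x t =
      (A + B * K).mulVec (x t) + (fromCols (-(B * K)) Bf).mulVec (e t))
    (hedyn : ∀ t, E.mulVec (deriv e t) =
      (Abar - L * C).mulVec (e t)
        + (L * Cω).mulVec (-(ωb • sgn ((H₂ * C).mulVec (e t))) - ω t)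
        + Bfbar.mulVec (d t - ρ • sgn ((H₁ * C).mulVec (e t)))) :
    Differentiable ℝ (fun t => x t ⬝ᵥ Q.mulVec (x t) + e t ⬝ᵥ P.mulVec (e t)) ∧
      (∀ t, deriv (fun t => x t ⬝ᵥ Q.mulVec (x t) + e t ⬝ᵥ P.mulVec (e t)) t ≤ 0) ∧
      (∀ t, (x t, e t) ≠ (0, 0) →
        deriv (fun t => x t ⬝ᵥ Q.mulVec (x t) + e t ⬝ᵥ P.mulVec (e t)) t < 0) := by
  have hPdet : IsUnit P.det := by
    have hherm : P.IsHermitian := by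
      show Pᴴ = P
      rw [conjTranspose_eq_transpose_of_trivial]; exact hPsymm
    have hpd : P.PosDef := .of_dotProduct_mulVec_pos hherm fun y hy => by simpa using hPpos y hy
    exact hpd.det_pos.ne'.isUnit
  have hE1 : E⁻¹ * E = 1 := Matrix.nonsing_inv_mul E hE
  have hP1 : P * P⁻¹ = 1 := Matrix.mul_nonsing_inv P hPdet
  have hPEL : P * E⁻¹ * L = N := by
    rw [hL]
    calc P * E⁻¹ * (E * P⁻¹ * N) = P * (E⁻¹ * E) * (P⁻¹ * N) := by
          simp only [Matrix.mul_assoc]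
      _ = N := by rw [hE1, Matrix.mul_one, ← Matrix.mul_assoc, hP1, Matrix.one_mul]
  have hV : ∀ t, HasDerivAt (fun t => x t ⬝ᵥ Q.mulVec (x t) + e t ⬝ᵥ P.mulVec (e t))
      (deriv x t ⬝ᵥ Q *ᵥ x t + x t ⬝ᵥ Q *ᵥ deriv x t
        + (deriv e t ⬝ᵥ P *ᵥ e t + e t ⬝ᵥ P *ᵥ deriv e t)) t := fun t =>
    (hasDerivAt_dotmv Q ((hx t).hasDerivAt) ((hx t).hasDerivAt)).add
      (hasDerivAt_dotmv P ((he t).hasDerivAt) ((he t).hasDerivAt))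
  have hbound : ∀ t,
      deriv x t ⬝ᵥ Q *ᵥ x t + x t ⬝ᵥ Q *ᵥ deriv x t
        + (deriv e t ⬝ᵥ P *ᵥ e t + e t ⬝ᵥ P *ᵥ deriv e t)
      ≤ (Sum.elim (x t) (e t)) ⬝ᵥ Ξ *ᵥ (Sum.elim (x t) (e t)) := by
    intro t
    have he' : deriv e t = E⁻¹ *ᵥ ((Abar - L * C) *ᵥ e t
        + (L * Cω) *ᵥ (-(ωb • sgn ((H₂ * C) *ᵥ e t)) - ω t)
        + Bfbar *ᵥ (d t - ρ • sgn ((H₁ * C) *ᵥ e t))) := by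
      have h3 : E⁻¹ *ᵥ (E *ᵥ deriv e t) = deriv e t := by
        rw [mulVec_mulVec, hE1, one_mulVec]
      rw [← h3, hedyn t]
    have hPE2 : (P * E⁻¹) * (L * Cω) = (H₂ * C)ᵀ := by
      rw [← Matrix.mul_assoc]; exact hH₂.symm
    have hPE1 : (P * E⁻¹) * Bfbar = (H₁ * C)ᵀ := hH₁.symm
    have hPELC : (P * E⁻¹) * (L * C) = N * C := by
      rw [← Matrix.mul_assoc, hPEL]
    have hx1 : x t ⬝ᵥ Q *ᵥ deriv x t
        = x t ⬝ᵥ (Q * (A + B * K)) *ᵥ x t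
          + x t ⬝ᵥ (Q * fromCols (-(B * K)) Bf) *ᵥ e t := by
      rw [hxdyn t, mulVec_add, dotProduct_add, mulVec_mulVec, mulVec_mulVec]
    have he2 : e t ⬝ᵥ P *ᵥ deriv e t
        = e t ⬝ᵥ (P * E⁻¹ * Abar) *ᵥ e t - e t ⬝ᵥ (N * C) *ᵥ e t
          + (-(ωb • sgn ((H₂ * C) *ᵥ e t)) - ω t) ⬝ᵥ ((H₂ * C) *ᵥ e t)
          + (d t - ρ • sgn ((H₁ * C) *ᵥ e t)) ⬝ᵥ ((H₁ * C) *ᵥ e t) := by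
      rw [he', mulVec_mulVec, mulVec_add, mulVec_add, dotProduct_add, dotProduct_add,
        mulVec_mulVec, mulVec_mulVec, mulVec_mulVec, Matrix.mul_sub, hPELC, hPE2, hPE1,
        sub_mulVec, dotProduct_sub, dot_transpose_eq, dot_transpose_eq]
    have hQ2 : (A + B * K)ᵀ * Q = (Q * (A + B * K))ᵀ := by
      rw [Matrix.transpose_mul, hQsymm]
    have hP2 : Abarᵀ * (E⁻¹)ᵀ * P = (P * E⁻¹ * Abar)ᵀ := by
      rw [Matrix.transpose_mul, Matrix.transpose_mul, hPsymm, Matrix.mul_assoc]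
    have hN2 : Cᵀ * Nᵀ = (N * C)ᵀ := (Matrix.transpose_mul N C).symm
    have hΞval : (Sum.elim (x t) (e t)) ⬝ᵥ Ξ *ᵥ (Sum.elim (x t) (e t))
        = 2 * (x t ⬝ᵥ (Q * (A + B * K)) *ᵥ x t)
          + 2 * (x t ⬝ᵥ (Q * fromCols (-(B * K)) Bf) *ᵥ e t)
          + 2 * (e t ⬝ᵥ (P * E⁻¹ * Abar) *ᵥ e t)
          - 2 * (e t ⬝ᵥ (N * C) *ᵥ e t) := by
      rw [hΞ, fromBlocks_mulVec, sumElim_dotProduct_sumElim, hQ2, hP2, hN2]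
      simp only [add_mulVec, sub_mulVec, dotProduct_add, dotProduct_sub, dot_transpose_eq,
        Sum.elim_comp_inl, Sum.elim_comp_inr]
      ring
    have hsw : (-(ωb • sgn ((H₂ * C) *ᵥ e t)) - ω t) ⬝ᵥ ((H₂ * C) *ᵥ e t) ≤ 0 := by
      rw [dotProduct_comm]; exact cross_bound1 _ _ _ (hω t)
    have hru : (d t - ρ • sgn ((H₁ * C) *ᵥ e t)) ⬝ᵥ ((H₁ * C) *ᵥ e t) ≤ 0 := by
      rw [dotProduct_comm, hρ]; exact cross_bound2 _ _ c η hη (hd t)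
    have hsymQ : deriv x t ⬝ᵥ Q *ᵥ x t = x t ⬝ᵥ Q *ᵥ deriv x t := dot_symm_of hQsymm _ _
    have hsymP : deriv e t ⬝ᵥ P *ᵥ e t = e t ⬝ᵥ P *ᵥ deriv e t := dot_symm_of hPsymm _ _
    rw [hsymQ, hsymP, hx1, he2, hΞval]
    linarith
  refine ⟨fun t => (hV t).differentiableAt, fun t => ?_, fun t hne => ?_⟩
  · rw [(hV t).deriv]
    have hq : (Sum.elim (x t) (e t)) ⬝ᵥ Ξ *ᵥ (Sum.elim (x t) (e t)) ≤ 0 := by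
      by_cases h0 : Sum.elim (x t) (e t) = 0
      · rw [h0]; simp
      · exact (hNegDef _ h0).le
    linarith [hbound t]
  · rw [(hV t).deriv]
    have hξ : Sum.elim (x t) (e t) ≠ 0 := by
      intro h0
      apply hne
      have hx0 : x t = 0 := funext fun i => congrFun h0 (Sum.inl i)
      have he0 : e t = 0 := funext fun i => congrFun h0 (Sum.inr i)
      rw [hx0, he0]
    exact lt_of_le_of_lt (hbound t) (hNegDef _ hξ)
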